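/- Let f be a face of a convex polytope τ in ℝ^d and let h be a hyperplane that does not meet the interior of τ. If f is the minimal face of τ containing a segment [q₁,q₂] with q₁, q₂ ∈ h ∩ τ, then f ⊆ h. -/
import Mathlib


/-- A face of a convex polytope `τ`: the empty set, `τ` itself, or the intersection
of `τ` with a supporting hyperplane. -/
def IsFace {d : ℕ} (C F : Set (EuclideanSpace ℝ (Fin d))) : Prop :=
  F = ∅ ∨ F = C ∨
    ∃ (f : EuclideanSpace ℝ (Fin d) →ₗ[ℝ] ℝ) (c : ℝ), f ≠ 0 ∧
      (∀ y ∈ C, f y ≤ c) ∧ F = C ∩ {y | f y = c}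

/-- Let `τ` be a convex polytope with nonempty interior and `h = {g = c}` a hyperplane
with `h ∩ interior τ = ∅`. If `F` is the smallest face of `τ` containing a segment
`[q₁, q₂]` with `q₁, q₂ ∈ h ∩ τ`, then `F ⊆ h`. -/
theorem stmt_3 {d : ℕ} (τ : Set (EuclideanSpace ℝ (Fin d)))
    (m : ℕ) (f : Fin m → (EuclideanSpace ℝ (Fin d) →ₗ[ℝ] ℝ)) (c : Fin m → ℝ)
    (hτ : τ = ⋂ i, {y | f i y ≤ c i}) (hbdd : Bornology.IsBounded τ)
    (hint : (interior τ).Nonempty)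
    (g : EuclideanSpace ℝ (Fin d) →ₗ[ℝ] ℝ) (hg : g ≠ 0) (c₀ : ℝ)
    (hdisj : {y | g y = c₀} ∩ interior τ = ∅)
    (q₁ q₂ : EuclideanSpace ℝ (Fin d))
    (hq₁ : g q₁ = c₀ ∧ q₁ ∈ τ) (hq₂ : g q₂ = c₀ ∧ q₂ ∈ τ)
    (F : Set (EuclideanSpace ℝ (Fin d)))
    (hF : IsFace τ F) (hseg : segment ℝ q₁ q₂ ⊆ F)
    (hmin : ∀ F', IsFace τ F' → segment ℝ q₁ q₂ ⊆ F' → F ⊆ F') :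
    F ⊆ {y | g y = c₀} := by
  have hτconv : Convex ℝ τ := by
    rw [hτ]; exact convex_iInter fun i => convex_halfSpace_le (f i).isLinear (c i)
  have hgc : Continuous g := g.continuous_of_finiteDimensional
  -- key step: if g' supports τ at level c' through q₁,q₂, then F ⊆ {g' = c'}
  have key : ∀ (g' : EuclideanSpace ℝ (Fin d) →ₗ[ℝ] ℝ) (c' : ℝ), g' ≠ 0 →
      (∀ y ∈ τ, g' y ≤ c') → g' q₁ = c' → g' q₂ = c' → F ⊆ {y | g' y = c'} := by
    intro g' c' hg' hle h1 h2
    have hface : IsFace τ (τ ∩ {y | g' y = c'}) :=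
      Or.inr (Or.inr ⟨g', c', hg', hle, rfl⟩)
    have hconv' : Convex ℝ (τ ∩ {y | g' y = c'}) :=
      hτconv.inter (convex_hyperplane g'.isLinear c')
    have hsub := hmin _ hface (hconv'.segment_subset ⟨hq₁.2, h1⟩ ⟨hq₂.2, h2⟩)
    exact fun x hx => (hsub hx).2
  have hne : ∀ y ∈ interior τ, g y ≠ c₀ := fun y hy h =>
    Set.eq_empty_iff_forall_notMem.1 hdisj y ⟨h, hy⟩
  have hpc : IsPreconnected (interior τ) := hτconv.interior.isPreconnected
  have hτcl : τ ⊆ closure (interior τ) := by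
    obtain ⟨a, ha⟩ := hint
    intro x hx
    haveI : (nhdsWithin (1:ℝ) (Set.Ioo 0 1)).NeBot :=
      right_nhdsWithin_Ioo_neBot (by norm_num)
    have hφ : Filter.Tendsto (fun t : ℝ => (1 - t) • a + t • x)
        (nhdsWithin 1 (Set.Ioo (0:ℝ) 1)) (nhds x) := by
      have hc : Continuous fun t : ℝ => (1 - t) • a + t • x :=
        ((continuous_const.sub continuous_id).smul continuous_const).add
          (continuous_id.smul continuous_const)
      have h1 : Filter.Tendsto (fun t : ℝ => (1 - t) • a + t • x)
          (nhdsWithin 1 (Set.Ioo (0:ℝ) 1)) (nhds ((1 - (1:ℝ)) • a + (1:ℝ) • x)) :=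
        (hc.tendsto 1).mono_left nhdsWithin_le_nhds
      simpa using h1
    refine mem_closure_of_tendsto hφ ?_
    filter_upwards [self_mem_nhdsWithin] with t ht
    exact hτconv.openSegment_interior_closure_subset_interior ha (subset_closure hx)
      ⟨1 - t, t, by linarith [ht.2], ht.1, by ring, rfl⟩
  -- either g < c₀ on all of interior τ, or g > c₀ on all of interior τ
  by_cases hcase : ∀ y ∈ interior τ, g y < c₀
  · have hle : ∀ y ∈ τ, g y ≤ c₀ := by
      intro y hy
      have : closure (interior τ) ⊆ {y | g y ≤ c₀} :=
        closure_minimal (fun z hz => (hcase z hz).le)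
          (isClosed_le hgc continuous_const)
      exact this (hτcl hy)
    exact key g c₀ hg hle hq₁.1 hq₂.1
  · push_neg at hcase
    obtain ⟨a, ha, hac⟩ := hcase
    have hagt : c₀ < g a := lt_of_le_of_ne hac (fun h => hne a ha h.symm)
    have hgt : ∀ y ∈ interior τ, c₀ < g y := by
      intro y hy
      rcases lt_or_ge c₀ (g y) with h | h
      · exact h
      · exfalso
        have := hpc.intermediate_value hy ha (hgc.continuousOn (s := interior τ))
        obtain ⟨z, hz, hzc⟩ := this ⟨h, hagt.le⟩
        exact hne z hz hzc
    have hle : ∀ y ∈ τ, (-g) y ≤ -c₀ := by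
      intro y hy
      have : closure (interior τ) ⊆ {y | -g y ≤ -c₀} :=
        closure_minimal (fun z hz => neg_le_neg (hgt z hz).le)
          (isClosed_le hgc.neg continuous_const)
      exact this (hτcl hy)
    have h1 : (-g) q₁ = -c₀ := by simp [hq₁.1]
    have h2 : (-g) q₂ = -c₀ := by simp [hq₂.1]
    have := key (-g) (-c₀) (neg_ne_zero.mpr hg) hle h1 h2
    intro x hx
    have hx' := this hx
    simpa [neg_eq_iff_eq_neg] using hx'
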